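/- Let d = d1 + d2 with d1 ≤ d2 integers. The rank-2 bundle E = O(d1) ⊕ O(d2) over P^1 admits an undecomposable quasi-parabolic structure at n ≥ 1 marked points if and only if d2 - d1 ≤ n - 2, except that in the case n = 2 with d1 = d2 every quasi-parabolic structure is decomposable. -/

import Mathlib

/-!
Model: a rank-2 bundle `E = O(d1) ⊕ O(d2)` on `P¹` (coordinate `z`, with all
marked points in the affine chart).  A bundle map `O(e) → O(d1) ⊕ O(d2)` is
given by a pair of polynomials `(f, g)` with `deg f ≤ d1 - e`, `deg g ≤ d2 - e`
(the degree bound encodes the behaviour at `∞`).  A direct-sum decomposition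
`E = L₁ ⊕ L₂` with `deg Lⱼ = eⱼ`, `e₁ + e₂ = d1 + d2`, is a pair of such maps
whose determinant is a nonzero constant.  A quasi-parabolic structure is a
rank-1 subspace of the fiber `ℂ²` over each marked point.
-/

/-- `degLE f m`: `f` defines a section of `O(m)` on `P¹`, i.e. `deg f ≤ m`
(so `f = 0` when `m < 0`). -/
def degLE (f : Polynomial ℂ) (m : ℤ) : Prop :=
  ∀ k : ℕ, m < (k : ℤ) → f.coeff k = 0

/-- The fiber at `z` of the line subbundle of `O(d1) ⊕ O(d2)` given by a pair of
polynomials `(f, g)`. -/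
noncomputable def fiber (f g : Polynomial ℂ) (z : ℂ) : Submodule ℂ (Fin 2 → ℂ) :=
  Submodule.span ℂ {![f.eval z, g.eval z]}

/-- The quasi-parabolic structure `l` on `E = O(d1) ⊕ O(d2)` with marked points
`t` is decomposable: `E = L₁ ⊕ L₂` with each parabolic direction `l i` contained
in a factor. -/
def Decomposable (d1 d2 : ℤ) {n : ℕ} (t : Fin n → ℂ)
    (l : Fin n → Submodule ℂ (Fin 2 → ℂ)) : Prop :=
  ∃ (e1 e2 : ℤ) (f1 g1 f2 g2 : Polynomial ℂ),
    e1 + e2 = d1 + d2 ∧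
    degLE f1 (d1 - e1) ∧ degLE g1 (d2 - e1) ∧
    degLE f2 (d1 - e2) ∧ degLE g2 (d2 - e2) ∧
    (∃ c : ℂ, c ≠ 0 ∧ f1 * g2 - g1 * f2 = Polynomial.C c) ∧
    ∀ i, l i = fiber f1 g1 (t i) ∨ l i = fiber f2 g2 (t i)

open Polynomial

lemma vec_eta (w : Fin 2 → ℂ) : ![w 0, w 1] = w := by
  funext j; fin_cases j <;> rfl

lemma vec_ne {w : Fin 2 → ℂ} (hw : w ≠ 0) (h0 : w 0 = 0) : w 1 ≠ 0 := by
  intro h1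
  apply hw
  funext j
  fin_cases j <;> simp [h0, h1]

lemma span_smul {s : ℂ} (hs : s ≠ 0) (v : Fin 2 → ℂ) :
    Submodule.span ℂ {s • v} = Submodule.span ℂ {v} :=
  Submodule.span_singleton_smul_eq (IsUnit.mk0 s hs) v

lemma degLE_of_neg {f : Polynomial ℂ} {m : ℤ} (h : degLE f m) (hm : m < 0) : f = 0 := by
  ext k
  rw [h k (lt_of_lt_of_le hm (Int.ofNat_nonneg k)), coeff_zero]

lemma degLE_const {f : Polynomial ℂ} (h : degLE f 0) : f = C (f.coeff 0) := by
  ext k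
  cases k with
  | zero => simp
  | succ k =>
      rw [h (k + 1) (by exact_mod_cast Nat.succ_pos k), coeff_C]
      simp

lemma degLE_C (c : ℂ) : degLE (C c) 0 := by
  intro k hk
  rw [coeff_C, if_neg]
  omega

lemma degLE_zero (m : ℤ) : degLE 0 m := fun k _ => coeff_zero k

lemma degLE_one : degLE 1 0 := by
  simpa using degLE_C 1

/-- From equality of spans of `![1,a]` and `![u,w]` get `u ≠ 0` and `w = u * a`. -/
lemma span_elim {a u w : ℂ}
    (h : Submodule.span ℂ {![(1 : ℂ), a]} = Submodule.span ℂ {![u, w]}) :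
    u ≠ 0 ∧ w = u * a := by
  have h1 : (![(1 : ℂ), a] : Fin 2 → ℂ) ∈ Submodule.span ℂ {![u, w]} := by
    rw [← h]; exact Submodule.mem_span_singleton_self _
  have h2 : (![u, w] : Fin 2 → ℂ) ∈ Submodule.span ℂ {![(1 : ℂ), a]} := by
    rw [h]; exact Submodule.mem_span_singleton_self _
  rw [Submodule.mem_span_singleton] at h1 h2
  obtain ⟨s, hs⟩ := h1
  obtain ⟨r, hr⟩ := h2
  have hs0 := congrFun hs 0
  have hr0 := congrFun hr 0
  have hr1 := congrFun hr 1
  simp only [Pi.smul_apply, Matrix.cons_val_zero, Matrix.cons_val_one, Matrix.head_cons,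
    smul_eq_mul, mul_one] at hs0 hr0 hr1
  constructor
  · intro hu
    rw [hu, mul_zero] at hs0
    simp at hs0
  · rw [← hr1, hr0]

lemma span_one_eq {x y : ℂ}
    (h : Submodule.span ℂ {![(1 : ℂ), x]} = Submodule.span ℂ {![(1 : ℂ), y]}) : x = y := by
  have := (span_elim h).2
  rw [one_mul] at this
  exact this.symm

lemma rank1_gen {W : Submodule ℂ (Fin 2 → ℂ)} (h : Module.finrank ℂ W = 1) :
    ∃ v : Fin 2 → ℂ, v ≠ 0 ∧ W = Submodule.span ℂ {v} := by
  have hbot : W ≠ ⊥ := by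
    intro hb
    rw [hb, finrank_bot] at h
    exact absurd h (by norm_num)
  obtain ⟨v, hv, hv0⟩ := (Submodule.ne_bot_iff W).mp hbot
  refine ⟨v, hv0, ?_⟩
  refine (Submodule.eq_of_le_of_finrank_le ?_ ?_).symm
  · rwa [Submodule.span_singleton_le_iff_mem]
  · rw [h, finrank_span_singleton hv0]

lemma fiber_C (a b : ℂ) (z : ℂ) :
    fiber (C a) (C b) z = Submodule.span ℂ {![a, b]} := by
  simp [fiber]


/-- If `n = 2` and `d1 = d2`, every quasi-parabolic structure is decomposable. -/
lemma decomp_two (d1 : ℤ) (t : Fin 2 → ℂ) (l : Fin 2 → Submodule ℂ (Fin 2 → ℂ))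
    (hl : ∀ i, Module.finrank ℂ (l i) = 1) : Decomposable d1 d1 t l := by
  classical
  obtain ⟨v0, hv0, hl0⟩ := rank1_gen (hl 0)
  obtain ⟨v1, hv1, hl1⟩ := rank1_gen (hl 1)
  by_cases hδ : v0 0 * v1 1 - v0 1 * v1 0 ≠ 0
  · -- independent generators: use the two constant lines
    refine ⟨d1, d1, C (v0 0), C (v0 1), C (v1 0), C (v1 1), by ring, ?_, ?_, ?_, ?_, ?_, ?_⟩
    · simpa using degLE_C (v0 0)
    · simpa using degLE_C (v0 1)
    · simpa using degLE_C (v1 0)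
    · simpa using degLE_C (v1 1)
    · exact ⟨v0 0 * v1 1 - v0 1 * v1 0, hδ, by rw [← C_mul, ← C_mul, ← C_sub]⟩
    · intro i
      fin_cases i
      · left; rw [fiber_C, vec_eta]; exact hl0
      · right; rw [fiber_C, vec_eta]; exact hl1
  · -- proportional generators: both lines equal `span {v0}`
    push_neg at hδ
    have hprop : Submodule.span ℂ {v1} = Submodule.span ℂ {v0} := by
      by_cases h00 : v0 0 = 0
      · have h01 : v0 1 ≠ 0 := vec_ne hv0 h00
        have h10 : v1 0 = 0 := by
          have h := hδ
          rw [h00, zero_mul, zero_sub, neg_eq_zero, mul_eq_zero] at h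
          tauto
        have hv1e : v1 = (v1 1 / v0 1) • v0 := by
          funext j
          fin_cases j
          · show v1 0 = v1 1 / v0 1 * v0 0
            rw [h00, h10, mul_zero]
          · show v1 1 = v1 1 / v0 1 * v0 1
            field_simp
        rw [hv1e]
        exact span_smul (by
          intro hq
          apply hv1
          rw [hv1e, hq, zero_smul]) v0
      · have hv1e : v1 = (v1 0 / v0 0) • v0 := by
          funext j
          fin_cases j
          · show v1 0 = v1 0 / v0 0 * v0 0
            field_simp
          · show v1 1 = v1 0 / v0 0 * v0 1
            field_simp
            linear_combination hδ
        rw [hv1e]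
        exact span_smul (by
          intro hq
          apply hv1
          rw [hv1e, hq, zero_smul]) v0
    -- pick a constant complement to `v0`
    set w : Fin 2 → ℂ := if v0 0 = 0 then ![1, 0] else ![0, 1] with hw
    have hdet : v0 0 * w 1 - v0 1 * w 0 ≠ 0 := by
      by_cases h00 : v0 0 = 0
      · have h01 : v0 1 ≠ 0 := vec_ne hv0 h00
        simp [hw, h00, h01]
      · simp [hw, h00]
    refine ⟨d1, d1, C (v0 0), C (v0 1), C (w 0), C (w 1), by ring, ?_, ?_, ?_, ?_, ?_, ?_⟩
    · simpa using degLE_C (v0 0)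
    · simpa using degLE_C (v0 1)
    · simpa using degLE_C (w 0)
    · simpa using degLE_C (w 1)
    · exact ⟨v0 0 * w 1 - v0 1 * w 0, hdet, by rw [← C_mul, ← C_mul, ← C_sub]⟩
    · intro i
      left
      rw [fiber_C, vec_eta]
      fin_cases i
      · exact hl0
      · exact hl1.trans hprop

/-- If `d2 - d1 ≥ n - 1`, every quasi-parabolic structure is decomposable. -/
lemma decomp_big (n : ℕ) (hn : 1 ≤ n) (d1 d2 : ℤ) (h12 : d1 ≤ d2)
    (hbig : (n : ℤ) - 1 ≤ d2 - d1) (t : Fin n → ℂ) (ht : Function.Injective t)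
    (l : Fin n → Submodule ℂ (Fin 2 → ℂ))
    (hl : ∀ i, Module.finrank ℂ (l i) = 1) : Decomposable d1 d2 t l := by
  classical
  choose v hv hlv using fun i => rank1_gen (hl i)
  set r : Fin n → ℂ := fun i => if v i 0 = 0 then 0 else v i 1 / v i 0 with hr
  set g : Polynomial ℂ := Lagrange.interpolate Finset.univ t r with hg
  have htinj : Set.InjOn t (Finset.univ : Finset (Fin n)) := fun a _ b _ hab => ht hab
  have hgeval : ∀ i, g.eval (t i) = r i := fun i =>
    Lagrange.eval_interpolate_at_node r htinj (Finset.mem_univ i)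
  have hgdeg : g.degree < (n : WithBot ℕ) := by
    have := Lagrange.degree_interpolate_lt r htinj
    simpa only [Finset.card_univ, Fintype.card_fin] using this
  have hgLE : degLE g (d2 - d1) := by
    intro k hk
    apply coeff_eq_zero_of_degree_lt
    refine lt_of_lt_of_le hgdeg ?_
    have : n ≤ k := by omega
    exact_mod_cast this
  refine ⟨d1, d2, 1, g, 0, 1, rfl, ?_, ?_, ?_, ?_, ?_, ?_⟩
  · simpa using degLE_one
  · simpa using hgLE
  · exact degLE_zero _
  · simpa using degLE_one
  · exact ⟨1, one_ne_zero, by simp⟩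
  · intro i
    by_cases h0 : v i 0 = 0
    · right
      have h1 : v i 1 ≠ 0 := vec_ne (hv i) h0
      have : v i = (v i 1) • ![(0 : ℂ), 1] := by
        funext j; fin_cases j <;> simp [h0]
      rw [hlv i, this, span_smul h1]
      simp [fiber]
    · left
      have : v i = (v i 0) • ![(1 : ℂ), r i] := by
        funext j
        fin_cases j
        · simp
        · simp [hr, h0]
          field_simp
      rw [hlv i, this, span_smul h0]
      simp only [fiber, eval_one, hgeval i]


/-- Fiber of a constant-first-coordinate map. -/
lemma fiber_Cu (u : ℂ) (g : Polynomial ℂ) (z : ℂ) :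
    fiber (Polynomial.C u) g z = Submodule.span ℂ {![u, g.eval z]} := by
  simp [fiber]

/-- Key one-sided lemma for `d1 < d2`: a decomposition with `e1 ≤ d1` is
impossible for the structure `l i = span ![1, δ_{i,0}]`. -/
lemma keyAux (n : ℕ) (hn : 3 ≤ n) (i0 : Fin n) (d1 d2 : ℤ) (hm : d1 < d2)
    (hmn : d2 - d1 ≤ (n : ℤ) - 2) (t : Fin n → ℂ) (ht : Function.Injective t)
    (e1 e2 : ℤ) (f1 g1 f2 g2 : Polynomial ℂ) (he : e1 + e2 = d1 + d2)
    (hf1 : degLE f1 (d1 - e1)) (hg1 : degLE g1 (d2 - e1))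
    (hf2 : degLE f2 (d1 - e2)) (hg2 : degLE g2 (d2 - e2))
    (c : ℂ) (hc : c ≠ 0) (hdet : f1 * g2 - g1 * f2 = Polynomial.C c)
    (he1 : e1 ≤ d1)
    (hl : ∀ i : Fin n,
        Submodule.span ℂ {![(1 : ℂ), if i = i0 then 1 else 0]} = fiber f1 g1 (t i) ∨
        Submodule.span ℂ {![(1 : ℂ), if i = i0 then 1 else 0]} = fiber f2 g2 (t i)) :
    False := by
  have hCc : Polynomial.C c ≠ 0 := by
    simpa [Polynomial.C_eq_zero] using hc
  -- e2 = d2, e1 = d1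
  have he2 : e2 = d2 := by
    by_contra h
    have h2 : d2 < e2 := by omega
    rw [degLE_of_neg hf2 (by omega), degLE_of_neg hg2 (by omega)] at hdet
    rw [mul_zero, mul_zero, sub_zero] at hdet
    exact hCc hdet.symm
  have he1' : e1 = d1 := by omega
  subst he1' he2
  -- analyze the constants
  have hf2z : f2 = 0 := degLE_of_neg hf2 (by omega)
  have hf1c : f1 = Polynomial.C (f1.coeff 0) := degLE_const (by simpa using hf1)
  have hg2c : g2 = Polynomial.C (g2.coeff 0) := degLE_const (by simpa using hg2)
  set u := f1.coeff 0 with hu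
  set b := g2.coeff 0 with hb
  have hub : u * b = c := by
    rw [hf1c, hg2c, hf2z] at hdet
    rw [mul_zero, sub_zero, ← Polynomial.C_mul] at hdet
    exact Polynomial.C_injective hdet
  have hune : u ≠ 0 := fun h => hc (by rw [← hub, h, zero_mul])
  -- second factor is the vertical line, which never contains `l i`
  have hfib2 : ∀ z : ℂ, fiber f2 g2 z = Submodule.span ℂ {![(0 : ℂ), b]} := by
    intro z
    rw [hf2z, hg2c]
    simp [fiber]
  have hall : ∀ i : Fin n, g1.eval (t i) = u * (if i = i0 then 1 else 0) := by
    intro i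
    rcases hl i with h | h
    · rw [hf1c, fiber_Cu] at h
      exact (span_elim h).2
    · rw [hfib2] at h
      exact absurd (span_elim h).1 (by simp)
  -- g1 vanishes at the n-1 points t i, i ≠ 0, and has degree ≤ n-2, so g1 = 0
  have hg1z : g1 = 0 := by
    apply Polynomial.eq_zero_of_natDegree_lt_card_of_eval_eq_zero g1
      (f := fun i : {i : Fin n // i ≠ i0} => t i.1)
      (fun i j hij => Subtype.ext (ht hij))
    · intro i
      rw [hall i.1, if_neg i.2, mul_zero]
    · have hcard : Fintype.card {i : Fin n // i ≠ i0} = n - 1 := by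
        simp [Fintype.card_subtype_compl]
      have hdeg : g1.natDegree ≤ n - 2 := by
        rw [Polynomial.natDegree_le_iff_coeff_eq_zero]
        intro N hN
        apply hg1
        have : ((n : ℤ)) - 2 < (N : ℤ) := by omega
        omega
      omega
  have := hall i0
  rw [hg1z, if_pos rfl, mul_one] at this
  simp at this
  exact hune this.symm

/-- Pigeonhole for three distinct lines in at most two boxes. -/
lemma pigeon3 {A B : Submodule ℂ (Fin 2 → ℂ)} {x y z : ℂ}
    (hxy : x ≠ y) (hxz : x ≠ z) (hyz : y ≠ z)
    (hx : Submodule.span ℂ {![(1 : ℂ), x]} = A ∨ Submodule.span ℂ {![(1 : ℂ), x]} = B)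
    (hy : Submodule.span ℂ {![(1 : ℂ), y]} = A ∨ Submodule.span ℂ {![(1 : ℂ), y]} = B)
    (hz : Submodule.span ℂ {![(1 : ℂ), z]} = A ∨ Submodule.span ℂ {![(1 : ℂ), z]} = B) :
    False := by
  rcases hx with hx | hx <;> rcases hy with hy | hy <;> rcases hz with hz | hz
  · exact hxy (span_one_eq (hx.trans hy.symm))
  · exact hxy (span_one_eq (hx.trans hy.symm))
  · exact hxz (span_one_eq (hx.trans hz.symm))
  · exact hyz (span_one_eq (hy.trans hz.symm))
  · exact hyz (span_one_eq (hy.trans hz.symm))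
  · exact hxz (span_one_eq (hx.trans hz.symm))
  · exact hxy (span_one_eq (hx.trans hy.symm))
  · exact hxy (span_one_eq (hx.trans hy.symm))

theorem stmt0 (n : ℕ) (hn : 1 ≤ n) (d1 d2 : ℤ) (h12 : d1 ≤ d2)
    (t : Fin n → ℂ) (ht : Function.Injective t) :
    (∃ l : Fin n → Submodule ℂ (Fin 2 → ℂ),
        (∀ i, Module.finrank ℂ (l i) = 1) ∧ ¬ Decomposable d1 d2 t l)
      ↔ (d2 - d1 ≤ (n : ℤ) - 2 ∧ ¬ (n = 2 ∧ d1 = d2)) := by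
  constructor
  · rintro ⟨l, hl, hnd⟩
    constructor
    · by_contra hP
      exact hnd (decomp_big n hn d1 d2 h12 (by omega) t ht l hl)
    · rintro ⟨hn2, hd⟩
      subst hn2
      subst hd
      exact hnd (decomp_two d1 t l hl)
  · rintro ⟨hP, hQ⟩
    have hn3 : 3 ≤ n := by
      rcases Nat.lt_or_ge n 3 with h | h
      · interval_cases n
        · omega
        · exact absurd ⟨rfl, by omega⟩ hQ
      · exact h
    rcases h12.lt_or_eq with hlt | heq
    · -- d1 < d2 : use the structure `l i = span ![1, δ_{i,0}]`
      refine ⟨fun i => Submodule.span ℂ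
          {![(1 : ℂ), if i = (⟨0, by omega⟩ : Fin n) then 1 else 0]}, ?_, ?_⟩
      · intro i
        apply finrank_span_singleton
        intro hz
        have := congrFun hz 0
        simp at this
      · rintro ⟨e1, e2, f1, g1, f2, g2, he, hf1, hg1, hf2, hg2, ⟨c, hc, hdet⟩, hl⟩
        have hor : e1 ≤ d1 ∨ e2 ≤ d1 := by
          by_contra h
          push_neg at h
          rw [degLE_of_neg hf1 (by omega), degLE_of_neg hf2 (by omega),
            zero_mul, mul_zero, sub_zero] at hdet
          exact hc (Polynomial.C_eq_zero.mp hdet.symm)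
        rcases hor with h | h
        · exact keyAux n hn3 ⟨0, by omega⟩ d1 d2 hlt hP t ht e1 e2 f1 g1 f2 g2 he
            hf1 hg1 hf2 hg2 c hc hdet h hl
        · refine keyAux n hn3 ⟨0, by omega⟩ d1 d2 hlt hP t ht e2 e1 f2 g2 f1 g1 (by omega)
            hf2 hg2 hf1 hg1 (-c) (neg_ne_zero.mpr hc) ?_ h (fun i => (hl i).symm)
          rw [map_neg, ← hdet]
          ring
    · -- d1 = d2 : use the structure `l i = span ![1, i]`
      subst heq
      refine ⟨fun i => Submodule.span ℂ {![(1 : ℂ), (i.val : ℂ)]}, ?_, ?_⟩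
      · intro i
        apply finrank_span_singleton
        intro hz
        have := congrFun hz 0
        simp at this
      · rintro ⟨e1, e2, f1, g1, f2, g2, he, hf1, hg1, hf2, hg2, ⟨c, hc, hdet⟩, hl⟩
        have hb1 : e1 ≤ d1 := by
          by_contra h
          push_neg at h
          rw [degLE_of_neg hf1 (by omega), degLE_of_neg hg1 (by omega),
            zero_mul, zero_mul, sub_zero] at hdet
          exact hc (Polynomial.C_eq_zero.mp hdet.symm)
        have hb2 : e2 ≤ d1 := by
          by_contra h
          push_neg at h
          rw [degLE_of_neg hf2 (by omega), degLE_of_neg hg2 (by omega),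
            mul_zero, mul_zero, sub_zero] at hdet
          exact hc (Polynomial.C_eq_zero.mp hdet.symm)
        have he1 : e1 = d1 := by omega
        have he2 : e2 = d1 := by omega
        subst he1
        have he2' : e2 = e1 := by omega
        subst he2'
        have hf1c := degLE_const (f := f1) (by simpa using hf1)
        have hg1c := degLE_const (f := g1) (by simpa using hg1)
        have hf2c := degLE_const (f := f2) (by simpa using hf2)
        have hg2c := degLE_const (f := g2) (by simpa using hg2)
        have hA : ∀ i : Fin n, fiber f1 g1 (t i)
            = Submodule.span ℂ {![f1.coeff 0, g1.coeff 0]} := by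
          intro i
          conv_lhs => rw [hf1c, hg1c]
          rw [fiber_C]
        have hB : ∀ i : Fin n, fiber f2 g2 (t i)
            = Submodule.span ℂ {![f2.coeff 0, g2.coeff 0]} := by
          intro i
          conv_lhs => rw [hf2c, hg2c]
          rw [fiber_C]
        have h0 := hl ⟨0, by omega⟩
        have h1 := hl ⟨1, by omega⟩
        have h2 := hl ⟨2, by omega⟩
        rw [hA, hB] at h0 h1 h2
        exact pigeon3
          (by show ((0 : ℕ) : ℂ) ≠ ((1 : ℕ) : ℂ); norm_num)
          (by show ((0 : ℕ) : ℂ) ≠ ((2 : ℕ) : ℂ); norm_num)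
          (by show ((1 : ℕ) : ℂ) ≠ ((2 : ℕ) : ℂ); norm_num)
          h0 h1 h2
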